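/- Let U ⊆ ℝ³ be open and let u : U → ℝ be C² with ‖∇_H u‖ > 0 on U. Then at every point of U the identity −4·Tu/‖∇_H u‖ = (X(q̄) − Y(p̄)) − E₁(log ‖∇_H u‖) holds, where p̄ = Xu/‖∇_H u‖, q̄ = Yu/‖∇_H u‖ and E₁ = −q̄·X + p̄·Y. In particular, −4·Tu/‖∇_H u‖ is expressible purely in terms of horizontal derivatives of u. -/

import Mathlib

/-- The Heisenberg vector field `X = ∂ₓ + 2y ∂ₜ` applied to `u`. -/
noncomputable def Xd (u : ℝ × ℝ × ℝ → ℝ) (p : ℝ × ℝ × ℝ) : ℝ :=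
  fderiv ℝ u p (1, 0, 2 * p.2.1)

/-- The Heisenberg vector field `Y = ∂_y − 2x ∂ₜ` applied to `u`. -/
noncomputable def Yd (u : ℝ × ℝ × ℝ → ℝ) (p : ℝ × ℝ × ℝ) : ℝ :=
  fderiv ℝ u p (0, 1, -(2 * p.1))

/-- The Reeb vector field `T = ∂ₜ` applied to `u`. -/
noncomputable def Td (u : ℝ × ℝ × ℝ → ℝ) (p : ℝ × ℝ × ℝ) : ℝ :=
  fderiv ℝ u p (0, 0, 1)

/-- The norm of the horizontal gradient `‖∇_H u‖ = √((Xu)² + (Yu)²)`. -/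
noncomputable def gradH (u : ℝ × ℝ × ℝ → ℝ) (p : ℝ × ℝ × ℝ) : ℝ :=
  Real.sqrt ((Xd u p) ^ 2 + (Yd u p) ^ 2)

/-- The horizontal mean curvature `H_u = X(Xu/‖∇_H u‖) + Y(Yu/‖∇_H u‖)`. -/
noncomputable def Hmean (u : ℝ × ℝ × ℝ → ℝ) (p : ℝ × ℝ × ℝ) : ℝ :=
  Xd (fun z => Xd u z / gradH u z) p + Yd (fun z => Yd u z / gradH u z) p

/-- The derivative along `E₁ = −q̄·X + p̄·Y` of a function `v`. -/
noncomputable def E1d (u v : ℝ × ℝ × ℝ → ℝ) (p : ℝ × ℝ × ℝ) : ℝ :=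
  -(Yd u p / gradH u p) * Xd v p + (Xd u p / gradH u p) * Yd v p

/-- The horizontal Gauss curvature `K_u = −4E₁(Tu/‖∇_H u‖) − 16(Tu/‖∇_H u‖)²`. -/
noncomputable def Kgauss (u : ℝ × ℝ × ℝ → ℝ) (p : ℝ × ℝ × ℝ) : ℝ :=
  -4 * E1d u (fun z => Td u z / gradH u z) p - 16 * (Td u p / gradH u p) ^ 2

/-- The symplectic distortion `Q_u = X(Yu/‖∇_H u‖) − Y(Xu/‖∇_H u‖)`. -/
noncomputable def Qdist (u : ℝ × ℝ × ℝ → ℝ) (p : ℝ × ℝ × ℝ) : ℝ :=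
  Xd (fun z => Yd u z / gradH u z) p - Yd (fun z => Xd u z / gradH u z) p

/-- The Heisenberg dilation `D_δ(x,y,t) = (δx, δy, δ²t)`. -/
def Ddil (δ : ℝ) (p : ℝ × ℝ × ℝ) : ℝ × ℝ × ℝ :=
  (δ * p.1, δ * p.2.1, δ ^ 2 * p.2.2)

/-- The Heisenberg instance of the key identity in the proof of the
Horizontal Theorema Egregium:
`−4·Tu/‖∇_H u‖ = (X(q̄) − Y(p̄)) − E₁(log ‖∇_H u‖)`. -/
theorem horizontal_theorema_egregium_identity
    (U : Set (ℝ × ℝ × ℝ)) (hU : IsOpen U) (u : ℝ × ℝ × ℝ → ℝ)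
    (hu : ContDiffOn ℝ 2 u U) (hgrad : ∀ p ∈ U, 0 < gradH u p) :
    ∀ p ∈ U, -4 * (Td u p / gradH u p) =
      Qdist u p - E1d u (fun z => Real.log (gradH u z)) p := by
  intro p hp
  have hu2 : ContDiffAt ℝ 2 u p := hu.contDiffAt (hU.mem_nhds hp)
  have hsymm : IsSymmSndFDerivAt ℝ u p := hu2.isSymmSndFDerivAt (by simp [minSmoothness_of_isRCLikeNormedField])
  have hF : HasFDerivAt (fderiv ℝ u) (fderiv ℝ (fderiv ℝ u) p) p :=
    ((hu2.fderiv_right (m := 1) (by norm_num)).differentiableAt one_ne_zero).hasFDerivAt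
  have hsnd : HasFDerivAt (fun z : ℝ × ℝ × ℝ => z.2.1)
      ((ContinuousLinearMap.fst ℝ ℝ ℝ).comp (ContinuousLinearMap.snd ℝ ℝ (ℝ × ℝ))) p :=
    (hasFDerivAt_snd).fst
  have hfst : HasFDerivAt (fun z : ℝ × ℝ × ℝ => z.1) (ContinuousLinearMap.fst ℝ ℝ (ℝ × ℝ)) p :=
    hasFDerivAt_fst
  have hvX : HasFDerivAt (fun z : ℝ × ℝ × ℝ => (((1:ℝ), (0:ℝ), 2 * z.2.1) : ℝ × ℝ × ℝ)) _ p :=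
    HasFDerivAt.prodMk (hasFDerivAt_const (1:ℝ) p) (HasFDerivAt.prodMk (hasFDerivAt_const (0:ℝ) p) (hsnd.const_mul 2))
  have hvY : HasFDerivAt (fun z : ℝ × ℝ × ℝ => (((0:ℝ), (1:ℝ), -(2 * z.1)) : ℝ × ℝ × ℝ)) _ p :=
    HasFDerivAt.prodMk (hasFDerivAt_const (0:ℝ) p) (HasFDerivAt.prodMk (hasFDerivAt_const (1:ℝ) p) ((hfst.const_mul 2).neg))
  have ha : HasFDerivAt (Xd u) _ p := hF.clm_apply hvX
  have hb : HasFDerivAt (Yd u) _ p := hF.clm_apply hvY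
  set F := fderiv ℝ (fderiv ℝ u) p with hFdef
  set vX : ℝ × ℝ × ℝ := (1, 0, 2 * p.2.1) with hvXdef
  set vY : ℝ × ℝ × ℝ := (0, 1, -(2 * p.1)) with hvYdef
  have h2T : (fderiv ℝ u p) ((0:ℝ), (0:ℝ), (2:ℝ)) = 2 * Td u p := by
    rw [Td, show (((0:ℝ), (0:ℝ), (2:ℝ)) : ℝ × ℝ × ℝ) = (2:ℝ) • (((0:ℝ), (0:ℝ), (1:ℝ)) : ℝ × ℝ × ℝ)
      by norm_num [Prod.smul_def], map_smul]
    simp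
  have hm2T : (fderiv ℝ u p) ((0:ℝ), (0:ℝ), (-2:ℝ)) = -(2 * Td u p) := by
    rw [Td, show (((0:ℝ), (0:ℝ), (-2:ℝ)) : ℝ × ℝ × ℝ) = (-2:ℝ) • (((0:ℝ), (0:ℝ), (1:ℝ)) : ℝ × ℝ × ℝ)
      by norm_num [Prod.smul_def], map_smul]
    simp
  have haX : (fderiv ℝ (Xd u) p) vX = F vX vX := by
    rw [ha.fderiv]; simp [hvXdef]; exact (fderiv ℝ u p).map_zero
  have haY : (fderiv ℝ (Xd u) p) vY = F vY vX + 2 * Td u p := by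
    rw [ha.fderiv]; simp [hvXdef, hvYdef, h2T]; ring
  have hbX : (fderiv ℝ (Yd u) p) vX = F vX vY - 2 * Td u p := by
    rw [hb.fderiv]; simp [hvXdef, hvYdef, hm2T]; ring
  have hbY : (fderiv ℝ (Yd u) p) vY = F vY vY := by
    rw [hb.fderiv]; simp [hvYdef]; exact (fderiv ℝ u p).map_zero
  have ha' : HasFDerivAt (Xd u) (fderiv ℝ (Xd u) p) p := ha.differentiableAt.hasFDerivAt
  have hb' : HasFDerivAt (Yd u) (fderiv ℝ (Yd u) p) p := hb.differentiableAt.hasFDerivAt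
  have hW : 0 < gradH u p := hgrad p hp
  have hs : 0 < (Xd u p) ^ 2 + (Yd u p) ^ 2 := Real.sqrt_pos.mp hW
  have hsq : HasFDerivAt (fun z => Xd u z ^ 2 + Yd u z ^ 2)
      ((Xd u p • fderiv ℝ (Xd u) p + Xd u p • fderiv ℝ (Xd u) p) +
        (Yd u p • fderiv ℝ (Yd u) p + Yd u p • fderiv ℝ (Yd u) p)) p := by
    have heq : (fun z : ℝ × ℝ × ℝ => Xd u z ^ 2 + Yd u z ^ 2)
        = fun z => Xd u z * Xd u z + Yd u z * Yd u z := by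
      funext z; ring
    rw [heq]; exact (ha'.mul ha').add (hb'.mul hb')
  have hw : HasFDerivAt (gradH u)
      ((1 / (2 * Real.sqrt (Xd u p ^ 2 + Yd u p ^ 2))) •
        ((Xd u p • fderiv ℝ (Xd u) p + Xd u p • fderiv ℝ (Xd u) p) +
          (Yd u p • fderiv ℝ (Yd u) p + Yd u p • fderiv ℝ (Yd u) p))) p :=
    (Real.hasDerivAt_sqrt hs.ne').comp_hasFDerivAt p hsq
  have hw' : HasFDerivAt (gradH u) (fderiv ℝ (gradH u) p) p := hw.differentiableAt.hasFDerivAt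
  have hinv : HasFDerivAt (fun z => (gradH u z)⁻¹)
      ((-((gradH u p) ^ 2)⁻¹) • fderiv ℝ (gradH u) p) p :=
    (hasDerivAt_inv hW.ne').comp_hasFDerivAt p hw'
  have hqb : HasFDerivAt (fun z => Yd u z / gradH u z)
      (Yd u p • ((-((gradH u p) ^ 2)⁻¹) • fderiv ℝ (gradH u) p) +
        (gradH u p)⁻¹ • fderiv ℝ (Yd u) p) p := by
    have heq : (fun z : ℝ × ℝ × ℝ => Yd u z / gradH u z)
        = fun z => Yd u z * (gradH u z)⁻¹ := by
      funext z; exact div_eq_mul_inv _ _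
    rw [heq]; exact hb'.mul hinv
  have hqa : HasFDerivAt (fun z => Xd u z / gradH u z)
      (Xd u p • ((-((gradH u p) ^ 2)⁻¹) • fderiv ℝ (gradH u) p) +
        (gradH u p)⁻¹ • fderiv ℝ (Xd u) p) p := by
    have heq : (fun z : ℝ × ℝ × ℝ => Xd u z / gradH u z)
        = fun z => Xd u z * (gradH u z)⁻¹ := by
      funext z; exact div_eq_mul_inv _ _
    rw [heq]; exact ha'.mul hinv
  have hlog : HasFDerivAt (fun z => Real.log (gradH u z))
      ((gradH u p)⁻¹ • fderiv ℝ (gradH u) p) p :=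
    (Real.hasDerivAt_log hW.ne').comp_hasFDerivAt p hw'
  -- evaluate the composite directional derivatives
  set W := gradH u p with hWdef
  set t := Td u p with htdef
  set wX := fderiv ℝ (gradH u) p vX with hwXdef
  set wY := fderiv ℝ (gradH u) p vY with hwYdef
  have e1 : Xd (fun z => Yd u z / gradH u z) p
      = Yd u p * (-(W ^ 2)⁻¹ * wX) + W⁻¹ * (F vX vY - 2 * t) := by
    rw [Xd, ← hvXdef, hqb.fderiv]
    simp [hbX, hwXdef]
  have e2 : Yd (fun z => Xd u z / gradH u z) p
      = Xd u p * (-(W ^ 2)⁻¹ * wY) + W⁻¹ * (F vY vX + 2 * t) := by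
    rw [Yd, ← hvYdef, hqa.fderiv]
    simp [haY, hwYdef]
  have e3 : Xd (fun z => Real.log (gradH u z)) p = W⁻¹ * wX := by
    rw [Xd, ← hvXdef, hlog.fderiv]
    simp [hwXdef]
  have e4 : Yd (fun z => Real.log (gradH u z)) p = W⁻¹ * wY := by
    rw [Yd, ← hvYdef, hlog.fderiv]
    simp [hwYdef]
  have hFsymm : F vX vY = F vY vX := hsymm vX vY
  rw [Qdist, E1d, e1, e2, e3, e4, hFsymm]
  have hWne : W ≠ 0 := hW.ne'
  rw [← hWdef]
  field_simp
  ring
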